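/- Let K be a field of positive characteristic p and let U, V be K[t]/(t^p)-modules. Give Hom_K(U, V) the K[t]/(t^p)-module structure with t acting by (t·f)(u) = t·f(u) − f(t·u). Then Hom_K(U, V) is projective if and only if U is projective or V is projective. -/

import Mathlib

set_option synthInstance.maxHeartbeats 1000000
set_option maxHeartbeats 1600000

/-- `K[t]/(t^p)`. -/
abbrev TruncP (K : Type*) [Field K] (p : ℕ) :=
  Polynomial K ⧸ Ideal.span {(Polynomial.X : Polynomial K) ^ p}

/-- the class of `t` in `K[t]/(t^p)`. -/
noncomputable abbrev tcl (K : Type*) [Field K] (p : ℕ) : TruncP K p :=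
  Ideal.Quotient.mk _ (Polynomial.X : Polynomial K)

namespace TruncAux
open Polynomial Finset
variable (K : Type*) [Field K] (p : ℕ)
lemma mk_eq : (Ideal.Quotient.mk (Ideal.span {(X : Polynomial K) ^ p})) =
    AdjoinRoot.mk ((X : Polynomial K) ^ p) := rfl
lemma tcl_pow_p : tcl K p ^ p = 0 := by
  rw [tcl, ← map_pow]
  exact Ideal.Quotient.eq_zero_iff_mem.mpr (Ideal.subset_span rfl)
noncomputable def co (j : ℕ) : TruncP K p →ₗ[K] K :=
  (lcoeff K j).comp (AdjoinRoot.modByMonicHom (monic_X_pow (R := K) p))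
noncomputable def Dmap : TruncP K p →ₗ[K] TruncP K p :=
  (Algebra.linearMap K (TruncP K p)).comp (co K p (p - 1))
lemma algMap_eq (c : K) :
    algebraMap K (TruncP K p) c = Ideal.Quotient.mk _ (C c) := rfl
lemma co_mk (j : ℕ) (g : Polynomial K) :
    co K p j (Ideal.Quotient.mk _ g) = (g %ₘ X ^ p).coeff j := rfl
lemma mk_rep (r : TruncP K p) :
    Ideal.Quotient.mk _ (AdjoinRoot.modByMonicHom (monic_X_pow (R := K) p) r) = r := by
  rw [mk_eq]
  exact AdjoinRoot.mk_leftInverse (monic_X_pow p) r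
lemma co_rep (j : ℕ) (r : TruncP K p) :
    co K p j r = (AdjoinRoot.modByMonicHom (monic_X_pow (R := K) p) r).coeff j := rfl
lemma rep_degree (hp : 0 < p) (r : TruncP K p) :
    (AdjoinRoot.modByMonicHom (monic_X_pow (R := K) p) r).natDegree < p := by
  set g := AdjoinRoot.modByMonicHom (monic_X_pow (R := K) p) r with hg
  rcases eq_or_ne g 0 with h | h
  · simpa [h] using hp
  · have : g.degree < (X ^ p : Polynomial K).degree := by
      obtain ⟨f, rfl⟩ := AdjoinRoot.mk_surjective (g := (X ^ p : Polynomial K)) r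
      rw [hg, AdjoinRoot.modByMonicHom_mk]
      exact degree_modByMonic_lt f (monic_X_pow p)
    rw [degree_X_pow] at this
    exact (natDegree_lt_iff_degree_lt h).mpr this
lemma core (hp : 0 < p) (q : Polynomial K) :
    Ideal.Quotient.mk (Ideal.span {(X : Polynomial K) ^ p}) (X ^ (p - 1) * q) =
      q.coeff 0 • tcl K p ^ (p - 1) := by
  conv_lhs => rw [← X_mul_divX_add q]
  rw [mul_add, show (X:Polynomial K) ^ (p-1) * (X * q.divX) = (X^(p-1) * X) * q.divX by ring,
    ← pow_succ, Nat.sub_add_cancel hp, map_add]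
  have h1 : Ideal.Quotient.mk (Ideal.span {(X : Polynomial K) ^ p}) (X ^ p * q.divX) = 0 := by
    refine Ideal.Quotient.eq_zero_iff_mem.mpr (Ideal.mem_span_singleton.mpr ⟨q.divX, rfl⟩)
  rw [h1, zero_add, ← algebraMap_smul (TruncP K p) (q.coeff 0) (tcl K p ^ (p-1)),
    smul_eq_mul, algMap_eq, ← map_pow, ← map_mul, mul_comm]

-- NEW PART
lemma coeff_mod (j : ℕ) (hj : j < p) (g : Polynomial K) :
    (g %ₘ X ^ p).coeff j = g.coeff j := by
  conv_rhs => rw [← modByMonic_add_div g ((X : Polynomial K) ^ p)]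
  rw [coeff_add, mul_comm, coeff_mul_X_pow', if_neg (not_le.mpr hj), add_zero]

lemma co_mk' (j : ℕ) (hj : j < p) (g : Polynomial K) :
    co K p j (Ideal.Quotient.mk _ g) = g.coeff j := by
  rw [co_mk, coeff_mod K p j hj]

lemma co_eq_zero (hp : 0 < p) (s : ℕ) (hs : p ≤ s) (r : TruncP K p) : co K p s r = 0 :=
  coeff_eq_zero_of_natDegree_lt (lt_of_lt_of_le (rep_degree K p hp r) hs)

lemma ann (hp : 0 < p) (r : TruncP K p) (h : tcl K p * r = 0) :
    tcl K p ^ (p - 1) * Dmap K p r = r := by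
  obtain ⟨g, rfl⟩ := Ideal.Quotient.mk_surjective r
  have hdvd : (X : Polynomial K) ^ p ∣ X * g := by
    rw [tcl, ← map_mul] at h
    exact Ideal.mem_span_singleton.mp (Ideal.Quotient.eq_zero_iff_mem.mp h)
  obtain ⟨q, hq⟩ := hdvd
  have hg : g = X ^ (p-1) * q := by
    have h2 : (X : Polynomial K) * g = X * (X^(p-1) * q) := by
      rw [hq, show (X:Polynomial K) * (X^(p-1) * q) = (X^(p-1) * X) * q by ring,
        ← pow_succ, Nat.sub_add_cancel hp]
    exact mul_left_cancel₀ X_ne_zero h2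
  subst hg
  have hc : (X ^ (p-1) * q).coeff (p-1) = q.coeff 0 := by
    have := coeff_X_pow_mul q (p-1) 0
    rwa [zero_add] at this
  have hD : Dmap K p (Ideal.Quotient.mk _ (X ^ (p-1) * q)) = algebraMap K _ (q.coeff 0) := by
    rw [Dmap, LinearMap.comp_apply, Algebra.linearMap_apply, co_mk' K p _ (Nat.sub_lt hp one_pos), hc]
  rw [hD, core K p hp, ← algebraMap_smul (TruncP K p) (q.coeff 0) (tcl K p ^ (p-1)),
    smul_eq_mul, mul_comm]

lemma shift (hp : 0 < p) (s : ℕ) (hs : s < p) (r : TruncP K p)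
    (h : ∀ j, j < s → co K p j r = 0) :
    tcl K p ^ (p - 1 - s) * r = co K p s r • tcl K p ^ (p - 1) := by
  have hr := mk_rep K p r
  set g := AdjoinRoot.modByMonicHom (monic_X_pow (R := K) p) r with hgdef
  have hdvd : (X : Polynomial K)^s ∣ g :=
    X_pow_dvd_iff.mpr (fun d hd => by rw [← co_rep] at *; exact h d hd)
  obtain ⟨q, hq⟩ := hdvd
  have hcos : co K p s r = q.coeff 0 := by
    rw [co_rep, ← hgdef, hq]
    have := coeff_X_pow_mul q s 0
    rwa [zero_add] at this
  rw [hcos]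
  conv_lhs => rw [← hr]
  rw [tcl, ← map_pow, ← map_mul, hq, show (X:Polynomial K)^(p-1-s) * (X^s * q)
      = X^(p-1-s+s) * q by rw [pow_add]; ring, Nat.sub_add_cancel (Nat.le_sub_one_of_lt hs),
    core K p hp]

lemma exists_coeff_ne (hp : 0 < p) (r : TruncP K p) (h : r ≠ 0) :
    ∃ j, j < p ∧ co K p j r ≠ 0 := by
  have hr := mk_rep K p r
  set g := AdjoinRoot.modByMonicHom (monic_X_pow (R := K) p) r with hgdef
  have hg : g ≠ 0 := by
    intro h0
    rw [h0, map_zero] at hr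
    exact h hr.symm
  exact ⟨g.natDegree, rep_degree K p hp r, by rw [co_rep, ← hgdef]; exact leadingCoeff_ne_zero.mpr hg⟩

lemma identity (hp : 0 < p) (r : TruncP K p) :
    ∑ j ∈ Finset.range p, tcl K p ^ j * Dmap K p (tcl K p ^ (p - 1 - j) * r) = r := by
  have hr := mk_rep K p r
  set g := AdjoinRoot.modByMonicHom (monic_X_pow (R := K) p) r with hgdef
  have hterm : ∀ j, j < p → tcl K p ^ j * Dmap K p (tcl K p ^ (p - 1 - j) * r)
      = Ideal.Quotient.mk _ (C (g.coeff j) * X ^ j) := by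
    intro j hj
    have h1 : tcl K p ^ (p-1-j) * r = Ideal.Quotient.mk _ (X^(p-1-j) * g) := by
      rw [← hr, tcl, ← map_pow, ← map_mul]
    have hc : (X ^ (p-1-j) * g).coeff (p-1) = g.coeff j := by
      have := coeff_X_pow_mul g (p-1-j) j
      rwa [Nat.add_sub_cancel' (Nat.le_sub_one_of_lt hj)] at this
    have h2 : Dmap K p (tcl K p ^ (p-1-j) * r) = algebraMap K _ (g.coeff j) := by
      rw [h1, Dmap, LinearMap.comp_apply, Algebra.linearMap_apply,
        co_mk' K p _ (Nat.sub_lt hp one_pos), hc]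
    rw [h2, tcl, ← map_pow, algMap_eq, ← map_mul, mul_comm]
  rw [Finset.sum_congr rfl (fun j hj => hterm j (Finset.mem_range.mp hj)), ← map_sum, ← hr]
  congr 1
  conv_rhs => rw [g.as_sum_range' p (rep_degree K p hp r)]
  exact Finset.sum_congr rfl (fun j _ => C_mul_X_pow_eq_monomial)


-- MODULE SECTION
variable (M : Type*) [AddCommGroup M] [Module K M] [Module (TruncP K p) M]
  [IsScalarTower K (TruncP K p) M]

/-- multiplication by `t` as a `K`-linear map. -/
noncomputable def tLin : M →ₗ[K] M where
  toFun m := tcl K p • m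
  map_add' a b := smul_add _ a b
  map_smul' c m := smul_comm (tcl K p) c m

variable {K p M}

lemma tLin_apply (m : M) : tLin K p M m = tcl K p • m := rfl

lemma crit_of_projective (hp : 0 < p) (h : Module.Projective (TruncP K p) M) :
    ∀ m : M, tcl K p • m = 0 → ∃ m', tcl K p ^ (p - 1) • m' = m := by
  obtain ⟨s, hs⟩ := (Module.projective_def).mp h
  intro m hm
  set l := s m with hl
  have hli : ∀ i, tcl K p * l i = 0 := by
    intro i
    have h1 : tcl K p • l = 0 := by rw [hl, ← map_smul, hm, map_zero]
    have := congrArg (fun z => z i) h1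
    simpa [Finsupp.smul_apply, smul_eq_mul] using this
  set l' := Finsupp.mapRange (Dmap K p) (map_zero _) l with hl'
  refine ⟨Finsupp.linearCombination _ id l', ?_⟩
  have h2 : tcl K p ^ (p-1) • l' = l := by
    ext i
    rw [Finsupp.smul_apply, hl', Finsupp.mapRange_apply, smul_eq_mul]
    exact ann K p hp (l i) (hli i)
  rw [← map_smul, h2]
  exact hs m

lemma crit_main (hp : 0 < p)
    (hcrit : ∀ m : M, tcl K p • m = 0 → ∃ m', tcl K p ^ (p - 1) • m' = m) :
    Module.Projective (TruncP K p) M ∧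
      ∃ π : M →ₗ[K] M,
        ∀ m : M, ∑ j ∈ Finset.range p, tcl K p ^ j • π (tcl K p ^ (p - 1 - j) • m) = m := by
  classical
  set τ := tcl K p with hτdef
  set S : Submodule K M := LinearMap.ker (tLin K p M) with hSdef
  set b : Module.Basis (Module.Basis.ofVectorSpaceIndex K S) K S := Module.Basis.ofVectorSpace K S with hbdef
  have hlift : ∀ i : Module.Basis.ofVectorSpaceIndex K S, ∃ y : M, τ ^ (p-1) • y = ((b i : S) : M) := by
    intro i
    exact hcrit _ (LinearMap.mem_ker.mp (b i).2)
  choose u hu using hlift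
  have hbindep : LinearIndependent K (fun i : Module.Basis.ofVectorSpaceIndex K S => ((b i : S) : M)) :=
    b.linearIndependent.map' S.subtype (Submodule.ker_subtype S)
  have hindep : LinearIndependent (TruncP K p) u := by
    rw [linearIndependent_iff]
    intro l hl
    by_contra hlne
    have hQ : ∃ j, ∃ i, co K p j (l i) ≠ 0 := by
      obtain ⟨i, hi⟩ := Finsupp.ne_iff.mp hlne
      obtain ⟨j, _, hj⟩ := exists_coeff_ne K p hp (l i) hi
      exact ⟨j, i, hj⟩
    set s := Nat.find hQ with hsdef
    obtain ⟨i₀, hi₀⟩ := Nat.find_spec hQ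
    have hmin : ∀ j, j < s → ∀ i, co K p j (l i) = 0 := by
      intro j hj i
      by_contra hne
      exact Nat.find_min hQ hj ⟨i, hne⟩
    have hsp : s < p := by
      by_contra hge
      exact hi₀ (co_eq_zero K p hp s (le_of_not_gt hge) _)
    have key : ∀ i, τ ^ (p-1-s) * l i = co K p s (l i) • τ ^ (p-1) :=
      fun i => shift K p hp s hsp (l i) (fun j hj => hmin j hj i)
    set l2 := Finsupp.mapRange (co K p s) (map_zero _) l with hl2
    have h0 : Finsupp.linearCombination K
        (fun i : Module.Basis.ofVectorSpaceIndex K S => ((b i : S) : M)) l2 = 0 := by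
      have h1 : τ ^ (p-1-s) • Finsupp.linearCombination (TruncP K p) u l = 0 := by
        rw [hl, smul_zero]
      rw [Finsupp.linearCombination_apply, Finsupp.smul_sum] at h1
      rw [Finsupp.linearCombination_apply, hl2, Finsupp.sum_mapRange_index (by simp)]
      rw [← h1]
      refine Finsupp.sum_congr (fun i _ => ?_)
      rw [smul_smul, key i, smul_assoc, hu i]
    have h2 := linearIndependent_iff.mp hbindep l2 h0
    refine hi₀ ?_
    rw [show Nat.find hQ = s from hsdef.symm]
    have := congrArg (fun z => z i₀) h2
    simpa [hl2, Finsupp.mapRange_apply] using this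
  have hker_expr : ∀ x : M, τ • x = 0 →
      ∃ y ∈ Submodule.span (TruncP K p) (Set.range u), τ ^ (p-1) • y = x := by
    intro x hx
    have hxS : x ∈ S := LinearMap.mem_ker.mpr hx
    set xs : S := ⟨x, hxS⟩ with hxs
    set c := b.repr xs with hc
    refine ⟨c.sum (fun i k => k • u i), ?_, ?_⟩
    · refine Submodule.sum_mem _ (fun i _ => ?_)
      show (c i) • u i ∈ _
      rw [← algebraMap_smul (TruncP K p) (c i) (u i)]
      exact Submodule.smul_mem _ _ (Submodule.subset_span ⟨i, rfl⟩)
    · rw [Finsupp.smul_sum]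
      have hterm : ∀ i (k : K), τ ^ (p-1) • (k • u i) = k • ((b i : S) : M) := by
        intro i k; rw [smul_comm, hu]
      calc c.sum (fun i (k : K) => τ ^ (p-1) • (k • u i))
            = c.sum (fun i (k : K) => k • ((b i : S) : M)) :=
            Finsupp.sum_congr (fun i _ => hterm i (c i))
        _ = ((c.sum (fun i (k : K) => k • b i) : S) : M) := by
            simp [Finsupp.sum]
        _ = x := by
            have h3 : c.sum (fun i (k : K) => k • b i) = xs := by
              have := b.linearCombination_repr xs
              rwa [Finsupp.linearCombination_apply] at this
            rw [h3]
  have hspan : ∀ k : ℕ, ∀ m : M, τ ^ k • m = 0 → m ∈ Submodule.span (TruncP K p) (Set.range u) := by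
    intro k
    induction k with
    | zero => intro m hm; rw [pow_zero, one_smul] at hm; rw [hm]; exact Submodule.zero_mem _
    | succ k ih =>
      intro m hm
      rcases le_or_gt p k with hk | hk
      · apply ih
        have hz : τ ^ k = 0 := by
          have : τ ^ k = τ ^ (k - p) * τ ^ p := by rw [← pow_add, Nat.sub_add_cancel hk]
          rw [this, hτdef, tcl_pow_p, mul_zero]
        rw [hz]; exact zero_smul (TruncP K p) m
      · have hx : τ • (τ ^ k • m) = 0 := by
          rw [smul_smul, ← pow_succ', hm]
        obtain ⟨y, hy, hyx⟩ := hker_expr (τ ^ k • m) hx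
        have h1 : τ ^ k • (m - τ ^ (p-1-k) • y) = 0 := by
          rw [smul_sub, smul_smul, ← pow_add, show k + (p-1-k) = p-1 by omega, hyx, sub_self]
        have h2 := ih _ h1
        have h3 : m = (m - τ ^ (p-1-k) • y) + τ ^ (p-1-k) • y := by abel
        rw [h3]
        exact Submodule.add_mem _ h2 (Submodule.smul_mem _ _ hy)
  have htop : ⊤ ≤ Submodule.span (TruncP K p) (Set.range u) := fun m _ =>
    hspan p m (by rw [hτdef, tcl_pow_p]; exact zero_smul (TruncP K p) m)
  let basis : Module.Basis _ (TruncP K p) M := Module.Basis.mk hindep htop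
  refine ⟨Module.Projective.of_basis basis, ?_⟩
  let re : M ≃ₗ[K] (_ →₀ TruncP K p) := basis.repr.restrictScalars K
  let π : M →ₗ[K] M :=
    (re.symm.toLinearMap).comp ((Finsupp.mapRange.linearMap (Dmap K p)).comp re.toLinearMap)
  refine ⟨π, fun m => ?_⟩
  apply basis.repr.injective
  rw [map_sum]
  have hπ : ∀ w : M, basis.repr (π w) = Finsupp.mapRange (Dmap K p) (map_zero _) (basis.repr w) := by
    intro w
    show basis.repr (re.symm (Finsupp.mapRange.linearMap (Dmap K p) (re w))) = _
    have : basis.repr (re.symm (Finsupp.mapRange.linearMap (Dmap K p) (re w)))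
        = re (re.symm (Finsupp.mapRange.linearMap (Dmap K p) (re w))) := rfl
    rw [this, LinearEquiv.apply_symm_apply]
    rfl
  ext i
  rw [Finsupp.finset_sum_apply]
  have hterm : ∀ j, (basis.repr (τ ^ j • π (τ ^ (p-1-j) • m))) i
      = τ ^ j * Dmap K p (τ ^ (p-1-j) * basis.repr m i) := by
    intro j
    rw [map_smul, Finsupp.smul_apply, hπ, Finsupp.mapRange_apply, map_smul,
      Finsupp.smul_apply, smul_eq_mul, smul_eq_mul]
  rw [Finset.sum_congr rfl (fun j _ => hterm j)]
  exact identity K p hp _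


-- extra helpers
variable {K' : Type*} [Field K'] {p' : ℕ} {M' : Type*} [AddCommGroup M'] [Module K' M']
  [Module (TruncP K' p') M'] [IsScalarTower K' (TruncP K' p') M']

lemma tLin_pow_apply (k : ℕ) (m : M') : ((tLin K' p' M') ^ k) m = tcl K' p' ^ k • m := by
  induction k with
  | zero => simp
  | succ k ih =>
    rw [pow_succ', Module.End.mul_apply, ih, tLin_apply, smul_smul, ← pow_succ']

lemma smul_pow_add (x y : ℕ) (m : M') :
    tcl K' p' ^ x • tcl K' p' ^ y • m = tcl K' p' ^ (x + y) • m := by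
  rw [smul_smul, ← pow_add]

end TruncAux


/-- Let `K` be a field of characteristic `p > 0`, and `U`, `V` modules over `K[t]/(t^p)`.
Any `K[t]/(t^p)`-module `H` which, compatibly with its `K`-structure, is isomorphic to
`Hom_K(U, V)` with `t` acting by `(t·f)(u) = t·f(u) − f(t·u)`, is projective if and only if
`U` is projective or `V` is projective. -/
theorem stmt4 {K : Type*} [Field K] (p : ℕ) [CharP K p] (hp : 0 < p)
    (U V H : Type*)
    [AddCommGroup U] [Module K U] [Module (TruncP K p) U] [IsScalarTower K (TruncP K p) U]
    [AddCommGroup V] [Module K V] [Module (TruncP K p) V] [IsScalarTower K (TruncP K p) V]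
    [AddCommGroup H] [Module K H] [Module (TruncP K p) H] [IsScalarTower K (TruncP K p) H]
    (e : H ≃ₗ[K] (U →ₗ[K] V))
    (he : ∀ (h : H) (u : U),
      e (tcl K p • h) u = tcl K p • e h u - e h (tcl K p • u)) :
    Module.Projective (TruncP K p) H ↔
      Module.Projective (TruncP K p) U ∨ Module.Projective (TruncP K p) V := by
  classical
  have hpp : p.Prime := (CharP.char_is_prime_or_zero K p).resolve_right (by omega)
  have hp2 : 2 ≤ p := hpp.two_le
  set τ := tcl K p with hτdef
  set tU := TruncAux.tLin K p U with htUdef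
  set tV := TruncAux.tLin K p V with htVdef
  set L : Module.End K (U →ₗ[K] V) := LinearMap.llcomp K U V V tV with hLdef
  set Rr : Module.End K (U →ₗ[K] V) := LinearMap.lcomp K V tU with hRdef
  have hLapp : ∀ (g : U →ₗ[K] V) (u : U), (L g) u = τ • g u := fun g u => rfl
  have hRapp : ∀ (g : U →ₗ[K] V) (u : U), (Rr g) u = g (τ • u) := fun g u => rfl
  have hLpow : ∀ (k : ℕ) (g : U →ₗ[K] V) (u : U), ((L ^ k) g) u = τ ^ k • g u := by
    intro k
    induction k with
    | zero => intro g u; simp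
    | succ k ih =>
      intro g u
      rw [pow_succ', Module.End.mul_apply, hLapp, ih, smul_smul, ← pow_succ']
  have hRpow : ∀ (k : ℕ) (g : U →ₗ[K] V) (u : U), ((Rr ^ k) g) u = g (τ ^ k • u) := by
    intro k
    induction k with
    | zero => intro g u; simp
    | succ k ih =>
      intro g u
      rw [pow_succ', Module.End.mul_apply, hRapp, ih, smul_smul, ← pow_succ]
  have hcomm : Commute L Rr := by
    show L * Rr = Rr * L
    refine LinearMap.ext fun g => LinearMap.ext fun u => ?_
    rfl
  have hchoose : ∀ j, j < p → (((p-1).choose j : ℕ) : K) = (-1 : K) ^ j := by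
    intro j
    induction j with
    | zero => intro _; simp
    | succ j ih =>
      intro hj
      have h1 : p.choose (j+1) = (p-1).choose j + (p-1).choose (j+1) := by
        conv_lhs => rw [show p = p - 1 + 1 by omega, Nat.choose_succ_succ]
      have h2 : ((p.choose (j+1) : ℕ) : K) = 0 :=
        (CharP.cast_eq_zero_iff K p _).mpr (hpp.dvd_choose_self (Nat.succ_ne_zero j) hj)
      have h3 : ((p-1).choose j : K) + ((p-1).choose (j+1) : K) = 0 := by
        rw [← Nat.cast_add, ← h1]
        exact h2
      rw [ih (by omega)] at h3
      rw [pow_succ]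
      linear_combination h3
  have hsign : (-1 : K) ^ (p - 1) = 1 := by
    rcases hpp.eq_two_or_odd' with h2 | hodd
    · subst h2
      have h20 : (2 : K) = 0 := by exact_mod_cast CharP.cast_eq_zero K 2
      rw [show (2:ℕ) - 1 = 1 by omega, pow_one]
      linear_combination -h20
    · exact (Nat.Odd.sub_odd hodd odd_one).neg_one_pow
  have hbin : (L - Rr) ^ (p-1) = ∑ j ∈ Finset.range p, L ^ j * Rr ^ (p-1-j) := by
    rw [sub_eq_add_neg, (hcomm.neg_right).add_pow]
    rw [show p - 1 + 1 = p by omega]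
    refine Finset.sum_congr rfl fun j hj => ?_
    have hj' := Finset.mem_range.mp hj
    rw [show -Rr = (-1 : K) • Rr from (neg_one_smul K Rr).symm, smul_pow,
      show (((p-1).choose j : ℕ) : Module.End K (U →ₗ[K] V))
        = algebraMap K _ (((p-1).choose j : ℕ) : K) from (map_natCast (algebraMap K _) _).symm,
      hchoose j hj', Algebra.algebraMap_eq_smul_one]
    simp only [mul_smul_comm, smul_mul_assoc, smul_smul, mul_one]
    rw [← pow_add, show j + (p - 1 - j) = p - 1 by omega, hsign, one_smul]
  have hem : ∀ h : H, e (τ • h) = (L - Rr) (e h) := by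
    intro h
    ext u
    rw [he h u]
    simp only [LinearMap.sub_apply]
    rfl
  have hek : ∀ (k : ℕ) (h : H), e (τ ^ k • h) = ((L - Rr) ^ k) (e h) := by
    intro k
    induction k with
    | zero => intro h; simp
    | succ k ih =>
      intro h
      rw [pow_succ', mul_smul, hem, ih, ← Module.End.mul_apply, ← pow_succ']
  have master : ∀ (h : H) (u : U),
      e (τ ^ (p-1) • h) u = ∑ j ∈ Finset.range p, τ ^ j • (e h) (τ ^ (p-1-j) • u) := by
    intro h u
    rw [hek, hbin, LinearMap.sum_apply, LinearMap.sum_apply]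
    refine Finset.sum_congr rfl fun j _ => ?_
    rw [Module.End.mul_apply, hLpow, hRpow]
  have hfgen : ∀ (f : U →ₗ[K] V), (∀ u, f (τ • u) = τ • f u) →
      ∀ (k : ℕ) (u : U), f (τ ^ k • u) = τ ^ k • f u := by
    intro f hf k
    induction k with
    | zero => intro u; simp
    | succ k ih =>
      intro u
      have h1 : τ ^ (k+1) • u = τ ^ k • (τ • u) := by
        rw [show τ • u = τ ^ 1 • u by rw [pow_one], TruncAux.smul_pow_add]
      rw [h1, ih, hf, smul_smul, ← pow_succ]
  constructor
  · -- forward direction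
    intro hH
    by_contra hcon
    push_neg at hcon
    obtain ⟨hU, hV⟩ := hcon
    have hcU : ¬ ∀ m : U, τ • m = 0 → ∃ m', τ ^ (p-1) • m' = m :=
      fun hc => hU (TruncAux.crit_main hp hc).1
    have hcV : ¬ ∀ m : V, τ • m = 0 → ∃ m', τ ^ (p-1) • m' = m :=
      fun hc => hV (TruncAux.crit_main hp hc).1
    push_neg at hcU hcV
    obtain ⟨u₀, hu₀t, hu₀n⟩ := hcU
    obtain ⟨v₀, hv₀t, hv₀n⟩ := hcV
    set Pu : ℕ → Prop := fun k => ∃ y : U, τ ^ k • y = u₀ with hPudef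
    set Pv : ℕ → Prop := fun k => ∃ y : V, τ ^ k • y = v₀ with hPvdef
    have hPU : Pu 0 := show ∃ y : U, τ ^ 0 • y = u₀ from ⟨u₀, by simp⟩
    have hPV : Pv 0 := show ∃ y : V, τ ^ 0 • y = v₀ from ⟨v₀, by simp⟩
    set a := Nat.findGreatest Pu (p-1) + 1 with hadef
    set b := Nat.findGreatest Pv (p-1) + 1 with hbdef
    have ha1 : ∃ y : U, τ ^ (a-1) • y = u₀ := by
      have h := Nat.findGreatest_spec (m := 0) (Nat.zero_le (p-1)) hPU
      have heq : Nat.findGreatest Pu (p-1) = a - 1 := by rw [hadef, Nat.add_sub_cancel]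
      rw [heq] at h
      exact h
    have hb1 : ∃ y : V, τ ^ (b-1) • y = v₀ := by
      have h := Nat.findGreatest_spec (m := 0) (Nat.zero_le (p-1)) hPV
      have heq : Nat.findGreatest Pv (p-1) = b - 1 := by rw [hbdef, Nat.add_sub_cancel]
      rw [heq] at h
      exact h
    have ha_le : a ≤ p - 1 := by
      have hle : Nat.findGreatest Pu (p-1) ≤ p-1 := Nat.findGreatest_le _
      rcases eq_or_lt_of_le hle with heq | hlt
      · exfalso
        obtain ⟨y, hy⟩ := ha1
        have h5 : a - 1 = p - 1 := by rw [hadef, Nat.add_sub_cancel, heq]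
        rw [h5] at hy
        exact hu₀n y hy
      · omega
    have hb_le : b ≤ p - 1 := by
      have hle : Nat.findGreatest Pv (p-1) ≤ p-1 := Nat.findGreatest_le _
      rcases eq_or_lt_of_le hle with heq | hlt
      · exfalso
        obtain ⟨y, hy⟩ := hb1
        have h5 : b - 1 = p - 1 := by rw [hbdef, Nat.add_sub_cancel, heq]
        rw [h5] at hy
        exact hv₀n y hy
      · omega
    have ha_not : ∀ y : U, τ ^ a • y ≠ u₀ := by
      intro y hy
      refine Nat.findGreatest_is_greatest (P := Pu) (n := p-1) ?_ ?_ (show Pu a from ⟨y, hy⟩)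
      · rw [hadef]
        exact Nat.lt_succ_self _
      · omega
    have hb_not : ∀ y : V, τ ^ b • y ≠ v₀ := by
      intro y hy
      refine Nat.findGreatest_is_greatest (P := Pv) (n := p-1) ?_ ?_ (show Pv b from ⟨y, hy⟩)
      · rw [hbdef]
        exact Nat.lt_succ_self _
      · omega
    obtain ⟨u₁, hu₁⟩ := ha1
    obtain ⟨v₁, hv₁⟩ := hb1
    have ha1' : 1 ≤ a := by rw [hadef]; omega
    have hb1' : 1 ≤ b := by rw [hbdef]; omega
    set m := min a b with hmdef
    have hma : m ≤ a := min_le_left a b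
    have hmb : m ≤ b := min_le_right a b
    have hm1 : 1 ≤ m := le_min ha1' hb1'
    have hmor : m = a ∨ m = b := min_choice a b
    have hu₁a : τ ^ a • u₁ = 0 := by
      calc τ ^ a • u₁ = τ ^ 1 • τ ^ (a-1) • u₁ := by
            rw [TruncAux.smul_pow_add, show 1 + (a-1) = a by omega]
        _ = τ • u₀ := by rw [pow_one, hu₁]
        _ = 0 := hu₀t
    have hv₁b : τ ^ b • v₁ = 0 := by
      calc τ ^ b • v₁ = τ ^ 1 • τ ^ (b-1) • v₁ := by
            rw [TruncAux.smul_pow_add, show 1 + (b-1) = b by omega]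
        _ = τ • v₀ := by rw [pow_one, hv₁]
        _ = 0 := hv₀t
    set W : Submodule K U := LinearMap.range (tU ^ b) with hWdef
    have hxW : τ ^ (m-1) • u₁ ∉ W := by
      rintro ⟨y, hy⟩
      rw [TruncAux.tLin_pow_apply] at hy
      apply ha_not (τ ^ (b - m) • y)
      calc τ ^ a • τ ^ (b-m) • y = τ ^ (a - m) • τ ^ b • y := by
            rw [TruncAux.smul_pow_add, TruncAux.smul_pow_add,
              show a + (b-m) = (a-m) + b by omega]
        _ = τ ^ (a-m) • τ ^ (m-1) • u₁ := by rw [hy]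
        _ = τ ^ (a-1) • u₁ := by
            rw [TruncAux.smul_pow_add, show a - m + (m-1) = a - 1 by omega]
        _ = u₀ := hu₁
    have hxq : (W.mkQ) (τ ^ (m-1) • u₁) ≠ 0 := by
      rw [Submodule.mkQ_apply, ne_eq, Submodule.Quotient.mk_eq_zero]
      exact hxW
    obtain ⟨φ, hφ⟩ : ∃ φ : Module.Dual K (U ⧸ W), φ (W.mkQ (τ ^ (m-1) • u₁)) ≠ 0 := by
      by_contra hall
      push_neg at hall
      exact hxq ((Module.forall_dual_apply_eq_zero_iff K _).mp hall)
    set ψ : U →ₗ[K] K := (φ (W.mkQ (τ ^ (m-1) • u₁)))⁻¹ • (φ.comp W.mkQ) with hψdef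
    have hψx : ψ (τ ^ (m-1) • u₁) = 1 := by
      rw [hψdef, LinearMap.smul_apply, LinearMap.comp_apply, smul_eq_mul]
      exact inv_mul_cancel₀ hφ
    have hψW : ∀ y : U, ψ (τ ^ b • y) = 0 := by
      intro y
      have hmem : τ ^ b • y ∈ W := ⟨y, by rw [TruncAux.tLin_pow_apply]⟩
      have hmem0 : W.mkQ (τ ^ b • y) = 0 := by
        rw [Submodule.mkQ_apply, Submodule.Quotient.mk_eq_zero]
        exact hmem
      rw [hψdef, LinearMap.smul_apply, LinearMap.comp_apply, hmem0, map_zero, smul_zero]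
    set f : U →ₗ[K] V :=
      ∑ k ∈ Finset.range b, ((ψ.comp (tU ^ k)).smulRight (τ ^ (b-1-k) • v₁)) with hfdef
    have hfapp : ∀ u : U,
        f u = ∑ k ∈ Finset.range b, ψ (τ ^ k • u) • (τ ^ (b-1-k) • v₁) := by
      intro u
      rw [hfdef, LinearMap.sum_apply]
      refine Finset.sum_congr rfl fun k _ => ?_
      rw [LinearMap.smulRight_apply, LinearMap.comp_apply, TruncAux.tLin_pow_apply]
    have hflin : ∀ u : U, f (τ • u) = τ • f u := by
      intro u
      rw [hfapp, hfapp, Finset.smul_sum]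
      have hAb : ψ (τ ^ b • u) • (τ ^ (b-b) • v₁) = 0 := by rw [hψW, zero_smul]
      have hA0 : ψ (τ ^ 0 • u) • (τ ^ (b-0) • v₁) = 0 := by
        rw [Nat.sub_zero, hv₁b, smul_zero]
      calc ∑ k ∈ Finset.range b, ψ (τ ^ k • (τ • u)) • (τ ^ (b-1-k) • v₁)
          = ∑ k ∈ Finset.range b, ψ (τ ^ (k+1) • u) • (τ ^ (b-(k+1)) • v₁) := by
            refine Finset.sum_congr rfl fun k hk => ?_
            have hk' := Finset.mem_range.mp hk
            rw [show τ • u = τ ^ 1 • u by rw [pow_one], TruncAux.smul_pow_add,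
              show b - 1 - k = b - (k+1) by omega]
        _ = ∑ k ∈ Finset.range b, ψ (τ ^ k • u) • (τ ^ (b-k) • v₁) := by
            have h1 := Finset.sum_range_succ' (fun j => ψ (τ ^ j • u) • (τ ^ (b-j) • v₁)) b
            have h2 := Finset.sum_range_succ (fun j => ψ (τ ^ j • u) • (τ ^ (b-j) • v₁)) b
            rw [hA0, add_zero] at h1
            rw [hAb, add_zero] at h2
            exact h1.symm.trans h2
        _ = ∑ k ∈ Finset.range b, τ • (ψ (τ ^ k • u) • (τ ^ (b-1-k) • v₁)) := by
            refine Finset.sum_congr rfl fun k hk => ?_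
            have hk' := Finset.mem_range.mp hk
            rw [smul_comm (τ) (ψ (τ ^ k • u)), show τ • (τ ^ (b-1-k) • v₁) = τ ^ 1 • (τ ^ (b-1-k) • v₁) by rw [pow_one],
              TruncAux.smul_pow_add, show 1 + (b-1-k) = b - k by omega]
    have hff := hfgen f hflin
    have hhz : τ • (e.symm f) = 0 := by
      apply e.injective
      rw [map_zero]
      ext u
      rw [he, LinearEquiv.apply_symm_apply, hflin, sub_self, LinearMap.zero_apply]
    obtain ⟨h', hh'⟩ := TruncAux.crit_of_projective hp hH (e.symm f) hhz
    have hfu : ∀ u : U, f u = ∑ j ∈ Finset.range p, τ ^ j • (e h') (τ ^ (p-1-j) • u) := by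
      intro u
      have h6 := master h' u
      rw [hh', LinearEquiv.apply_symm_apply] at h6
      exact h6
    have hmem : f u₁ ∈ LinearMap.range (tV ^ (p - a)) := by
      rw [hfu u₁]
      refine Submodule.sum_mem _ fun j hj => ?_
      have hj' := Finset.mem_range.mp hj
      rcases lt_or_ge j (p - a) with hcase | hcase
      · have hz : τ ^ (p-1-j) • u₁ = 0 := by
          have h7 : τ ^ (p-1-j) • u₁ = τ ^ (p-1-j-a) • (τ ^ a • u₁) := by
            rw [TruncAux.smul_pow_add, show p-1-j-a + a = p-1-j by omega]
          rw [h7, hu₁a, smul_zero]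
        rw [hz, map_zero, smul_zero]
        exact Submodule.zero_mem _
      · refine ⟨τ ^ (j - (p-a)) • (e h') (τ ^ (p-1-j) • u₁), ?_⟩
        rw [TruncAux.tLin_pow_apply, TruncAux.smul_pow_add,
          show p - a + (j - (p-a)) = j by omega]
    obtain ⟨w, hw⟩ := hmem
    rw [TruncAux.tLin_pow_apply] at hw
    have hkey : τ ^ (m-1) • f u₁ = v₀ := by
      rw [← hff (m-1) u₁, hfapp]
      rw [Finset.sum_eq_single 0]
      · rw [pow_zero, one_smul, hψx, one_smul, show b - 1 - 0 = b-1 by omega, hv₁]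
      · intro k hk hk0
        have hk' := Finset.mem_range.mp hk
        have hk1 : 1 ≤ k := by omega
        rcases le_or_gt b (k + m - 1) with hge | hlt
        · have h6 : τ ^ k • τ ^ (m-1) • u₁ = τ ^ b • (τ ^ (k + m - 1 - b) • u₁) := by
            rw [TruncAux.smul_pow_add, TruncAux.smul_pow_add,
              show b + (k+m-1-b) = k + (m-1) by omega]
          rw [h6, hψW, zero_smul]
        · have hma' : m = a := by omega
          have h7 : τ ^ k • τ ^ (m-1) • u₁ = τ ^ (k - 1) • (τ ^ a • u₁) := by
            rw [TruncAux.smul_pow_add, TruncAux.smul_pow_add,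
              show k - 1 + a = k + (m-1) by omega]
          rw [h7, hu₁a, smul_zero, map_zero, zero_smul]
      · intro h0
        exact absurd (Finset.mem_range.mpr (by omega)) h0
    refine hb_not (τ ^ (p - a + (m-1) - b) • w) ?_
    calc τ ^ b • τ ^ (p - a + (m-1) - b) • w = τ ^ ((m-1) + (p - a)) • w := by
          rw [TruncAux.smul_pow_add, show b + (p - a + (m-1) - b) = (m-1) + (p-a) by omega]
      _ = τ ^ (m-1) • τ ^ (p-a) • w := by rw [TruncAux.smul_pow_add]
      _ = τ ^ (m-1) • f u₁ := by rw [hw]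
      _ = v₀ := hkey
  · -- backward direction
    rintro (hUp | hVp)
    · obtain ⟨-, π, hπ⟩ := TruncAux.crit_main hp (TruncAux.crit_of_projective hp hUp)
      refine (TruncAux.crit_main hp ?_).1
      intro hh hhz
      have hflin : ∀ u : U, (e hh) (τ • u) = τ • (e hh) u := by
        intro u
        have h1 := he hh u
        rw [hhz, map_zero, LinearMap.zero_apply] at h1
        exact (sub_eq_zero.mp h1.symm).symm
      have hff := hfgen (e hh) hflin
      refine ⟨e.symm ((e hh).comp π), ?_⟩
      apply e.injective
      ext u
      rw [master, LinearEquiv.apply_symm_apply]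
      calc ∑ j ∈ Finset.range p, τ ^ j • ((e hh).comp π) (τ ^ (p-1-j) • u)
          = ∑ j ∈ Finset.range p, (e hh) (τ ^ j • π (τ ^ (p-1-j) • u)) := by
            refine Finset.sum_congr rfl fun j _ => ?_
            rw [LinearMap.comp_apply, hff]
        _ = (e hh) (∑ j ∈ Finset.range p, τ ^ j • π (τ ^ (p-1-j) • u)) :=
            (map_sum (e hh) _ _).symm
        _ = (e hh) u := by rw [hπ u]
    · obtain ⟨-, π, hπ⟩ := TruncAux.crit_main hp (TruncAux.crit_of_projective hp hVp)
      refine (TruncAux.crit_main hp ?_).1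
      intro hh hhz
      have hflin : ∀ u : U, (e hh) (τ • u) = τ • (e hh) u := by
        intro u
        have h1 := he hh u
        rw [hhz, map_zero, LinearMap.zero_apply] at h1
        exact (sub_eq_zero.mp h1.symm).symm
      have hff := hfgen (e hh) hflin
      refine ⟨e.symm (π.comp (e hh)), ?_⟩
      apply e.injective
      ext u
      rw [master, LinearEquiv.apply_symm_apply]
      calc ∑ j ∈ Finset.range p, τ ^ j • (π.comp (e hh)) (τ ^ (p-1-j) • u)
          = ∑ j ∈ Finset.range p, τ ^ j • π (τ ^ (p-1-j) • (e hh) u) := by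
            refine Finset.sum_congr rfl fun j _ => ?_
            rw [LinearMap.comp_apply, hff]
        _ = (e hh) u := hπ ((e hh) u)
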